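/- For all u ≤ 1 − Γ^{-1} with Γ > 1 and u < 1: (−ln(1−u) − u)/u² ≤ Γ² ln(Γ)/(Γ−1)² + Γ/(Γ−1). -/

import Mathlib

open intervalIntegral in
private lemma aux_repr (u : ℝ) (hu : u < 1) (h0 : u ≠ 0) :
    (-Real.log (1 - u) - u) / u ^ 2 = ∫ s in (0:ℝ)..1, s / (1 - u * s) := by
  have hpos : ∀ s ∈ Set.Icc (0:ℝ) 1, 0 < 1 - u * s := by
    intro s hs
    rcases le_or_gt u 0 with h | h
    · nlinarith [hs.1, hs.2]
    · nlinarith [hs.1, hs.2]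
  have hcont : ContinuousOn (fun s : ℝ => s / (1 - u * s)) (Set.Icc (0:ℝ) 1) := by
    apply ContinuousOn.div continuousOn_id
    · exact (continuousOn_const.sub (continuousOn_const.mul continuousOn_id))
    · intro s hs; exact ne_of_gt (hpos s hs)
  have huIcc : Set.uIcc (0:ℝ) 1 = Set.Icc 0 1 := Set.uIcc_of_le zero_le_one
  have hderiv : ∀ s ∈ Set.uIcc (0:ℝ) 1,
      HasDerivAt (fun s => (-Real.log (1 - u * s) - u * s) / u ^ 2)
        (s / (1 - u * s)) s := by
    intro s hs
    rw [huIcc] at hs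
    have hne : (1 - u * s) ≠ 0 := ne_of_gt (hpos s hs)
    have h1 : HasDerivAt (fun s : ℝ => 1 - u * s) (-u) s := by
      simpa using ((hasDerivAt_id s).const_mul u).const_sub 1
    have h2 : HasDerivAt (fun s : ℝ => Real.log (1 - u * s)) (-u / (1 - u * s)) s :=
      h1.log hne
    have h3 : HasDerivAt (fun s : ℝ => u * s) u s := by
      simpa using (hasDerivAt_id s).const_mul u
    have h4 := ((h2.neg.sub h3).div_const (u ^ 2))
    convert h4 using 1
    · rfl
    · rfl
    · rfl
    · rw [div_eq_div_iff hne (pow_ne_zero 2 h0), sub_mul, neg_div, neg_neg, div_mul_cancel₀ _ hne]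
      ring
  have := integral_eq_sub_of_hasDerivAt hderiv
    ((hcont.mono (by rw [huIcc])).intervalIntegrable)
  rw [this]
  simp

private lemma aux_mono (u v : ℝ) (huv : u ≤ v) (hv : v < 1) :
    (∫ s in (0:ℝ)..1, s / (1 - u * s)) ≤ ∫ s in (0:ℝ)..1, s / (1 - v * s) := by
  have hu : u < 1 := lt_of_le_of_lt huv hv
  have hposu : ∀ s ∈ Set.Icc (0:ℝ) 1, 0 < 1 - u * s := by
    intro s hs
    rcases le_or_gt u 0 with h | h
    · nlinarith [hs.1, hs.2]
    · nlinarith [hs.1, hs.2]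
  have hposv : ∀ s ∈ Set.Icc (0:ℝ) 1, 0 < 1 - v * s := by
    intro s hs
    rcases le_or_gt v 0 with h | h
    · nlinarith [hs.1, hs.2]
    · nlinarith [hs.1, hs.2]
  have huIcc : Set.uIcc (0:ℝ) 1 = Set.Icc 0 1 := Set.uIcc_of_le zero_le_one
  have hintu : IntervalIntegrable (fun s : ℝ => s / (1 - u * s)) MeasureTheory.volume 0 1 := by
    apply ContinuousOn.intervalIntegrable
    rw [huIcc]
    apply ContinuousOn.div continuousOn_id
    · exact (continuousOn_const.sub (continuousOn_const.mul continuousOn_id))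
    · intro s hs; exact ne_of_gt (hposu s hs)
  have hintv : IntervalIntegrable (fun s : ℝ => s / (1 - v * s)) MeasureTheory.volume 0 1 := by
    apply ContinuousOn.intervalIntegrable
    rw [huIcc]
    apply ContinuousOn.div continuousOn_id
    · exact (continuousOn_const.sub (continuousOn_const.mul continuousOn_id))
    · intro s hs; exact ne_of_gt (hposv s hs)
  apply intervalIntegral.integral_mono_on zero_le_one hintu hintv
  intro s hs
  have h1 := hposu s hs
  have h2 := hposv s hs
  apply div_le_div_of_nonneg_left hs.1 h2
  nlinarith [hs.1, hs.2]

/-- Elementary inequality: for all `Γ > 1` and all `u < 1` with `u ≤ 1 - Γ⁻¹`,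
`(-ln(1-u) - u)/u² ≤ Γ² ln Γ/(Γ-1)² + Γ/(Γ-1)`. -/
theorem neg_log_one_sub_div_sq_bound
    (Γ : ℝ) (hΓ : 1 < Γ) (u : ℝ) (hu1 : u < 1) (hu : u ≤ 1 - Γ⁻¹) :
    (-Real.log (1 - u) - u) / u ^ 2
      ≤ Γ ^ 2 * Real.log Γ / (Γ - 1) ^ 2 + Γ / (Γ - 1) := by
  have hΓ0 : (0:ℝ) < Γ := lt_trans one_pos hΓ
  have hΓ1 : (0:ℝ) < Γ - 1 := by linarith
  have hΓne : Γ ≠ 0 := ne_of_gt hΓ0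
  have hlog : 0 < Real.log Γ := Real.log_pos hΓ
  have hrhs0 : 0 ≤ Γ ^ 2 * Real.log Γ / (Γ - 1) ^ 2 + Γ / (Γ - 1) := by positivity
  rcases eq_or_ne u 0 with rfl | h0
  · simpa using hrhs0
  set v : ℝ := 1 - Γ⁻¹ with hvdef
  have hv0 : 0 < v := by
    have : Γ⁻¹ < 1 := by rw [inv_lt_one_iff₀]; right; exact hΓ
    simp only [hvdef]; linarith
  have hv1 : v < 1 := by
    have : 0 < Γ⁻¹ := by positivity
    simp only [hvdef]; linarith
  have hvne : v ≠ 0 := ne_of_gt hv0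
  have key : (-Real.log (1 - u) - u) / u ^ 2 ≤ (-Real.log (1 - v) - v) / v ^ 2 := by
    rw [aux_repr u hu1 h0, aux_repr v hv1 hvne]
    exact aux_mono u v hu hv1
  have hval : (-Real.log (1 - v) - v) / v ^ 2
      = Γ ^ 2 * Real.log Γ / (Γ - 1) ^ 2 - Γ / (Γ - 1) := by
    have h1v : 1 - v = Γ⁻¹ := by simp [hvdef]
    rw [h1v, Real.log_inv]
    have hv : v = (Γ - 1) / Γ := by
      simp only [hvdef]; field_simp
    rw [hv]
    have h1 : Γ - 1 ≠ 0 := ne_of_gt hΓ1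
    field_simp
  rw [hval] at key
  have : Γ / (Γ - 1) > 0 := by positivity
  linarith
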